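/- Let k be a positive integer, θ ∈ [0,1), and let λ, μ : ℝ → ℝ be continuous at 0 from the right with λ(0) = μ(0) = 1. Then lim_{z→0⁺} |θ·μ(z) − λ(z)^k| / (1 − θ·|μ(z)|) = 1. -/

import Mathlib

open Filter Topology

/-- θ-Parareal loses the exact approximation property as `h_tξ → 0⁺`: for any
weight `θ ∈ [0,1)` and any stability functions with `λ(0) = μ(0) = 1` continuous
at `0` from the right, the weighted convergence bound
`|θμ(z) - λ(z)^k|/(1 - θ|μ(z)|)` tends to `1` as `z → 0⁺`. -/
theorem stmt_11 (k : ℕ) (hk : 0 < k) (θ : ℝ) (hθ0 : 0 ≤ θ) (hθ1 : θ < 1)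
    (lam μ : ℝ → ℝ)
    (hlamc : ContinuousWithinAt lam (Set.Ici 0) 0)
    (hμc : ContinuousWithinAt μ (Set.Ici 0) 0)
    (hlam0 : lam 0 = 1) (hμ0 : μ 0 = 1) :
    Tendsto (fun z : ℝ => |θ * μ z - (lam z) ^ k| / (1 - θ * |μ z|))
      (𝓝[>] 0) (𝓝 1) := by
  have hsub : 𝓝[>] (0:ℝ) ≤ 𝓝[Set.Ici 0] 0 := nhdsWithin_mono _ Set.Ioi_subset_Ici_self
  have hlam : Tendsto lam (𝓝[>] 0) (𝓝 1) := by
    simpa [hlam0] using hlamc.tendsto.mono_left hsub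
  have hμ : Tendsto μ (𝓝[>] 0) (𝓝 1) := by
    simpa [hμ0] using hμc.tendsto.mono_left hsub
  have hnum : Tendsto (fun z => |θ * μ z - (lam z) ^ k|) (𝓝[>] 0) (𝓝 (1 - θ)) := by
    have : Tendsto (fun z => θ * μ z - (lam z) ^ k) (𝓝[>] 0) (𝓝 (θ * 1 - 1 ^ k)) :=
      ((tendsto_const_nhds.mul hμ).sub (hlam.pow k))
    have h := this.abs
    have heq : |θ * 1 - 1 ^ k| = 1 - θ := by
      simp only [mul_one, one_pow]
      rw [abs_sub_comm, abs_of_nonneg (by linarith)]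
    rwa [heq] at h
  have hden : Tendsto (fun z => 1 - θ * |μ z|) (𝓝[>] 0) (𝓝 (1 - θ)) := by
    have h1 : Tendsto (fun z => 1 - θ * |μ z|) (𝓝[>] 0) (𝓝 (1 - θ * |(1:ℝ)|)) :=
      (tendsto_const_nhds (x := (1:ℝ))).sub ((tendsto_const_nhds (x := θ)).mul hμ.abs)
    simpa using h1
  have h := hnum.div hden (by linarith : (1:ℝ) - θ ≠ 0)
  rw [div_self (by linarith : (1:ℝ) - θ ≠ 0)] at h
  exact h
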